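/- Let p be a prime with p ≡ 1 (mod 4) and let q be a prime with q ≡ 3 (mod 4) such that q is not a quadratic residue modulo p. Then the quaternion algebra ℍ[ℚₚ, −q, −p] over ℚₚ is a division algebra: every nonzero element is a unit. (That is, the quaternion ℚ-algebra Q(−q, −p | ℚ) is ramified at p.) -/

import Mathlib

open Quaternion

variable (p q : ℕ) [Fact p.Prime]

lemma key_unit (z : ℤ_[p]) : ‖z‖ = 1 ↔ PadicInt.toZMod z ≠ 0 := by
  rw [← PadicInt.isUnit_iff]
  constructor
  · intro h h0
    have : z ∈ RingHom.ker (PadicInt.toZMod (p := p)) := h0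
    rw [PadicInt.ker_toZMod] at this
    exact (IsLocalRing.mem_maximalIdeal z).mp this h
  · intro h0
    by_contra h
    have : z ∈ IsLocalRing.maximalIdeal ℤ_[p] := (IsLocalRing.mem_maximalIdeal z).mpr h
    rw [← PadicInt.ker_toZMod] at this
    exact h0 this

lemma negq_not_sq (hp1 : p % 4 = 1) (hqr : ¬ IsSquare (q : ZMod p)) :
    ¬ IsSquare (-(q : ZMod p)) := by
  intro ⟨s, hs⟩
  obtain ⟨u, hu⟩ : IsSquare (-1 : ZMod p) := by
    rw [ZMod.exists_sq_eq_neg_one_iff]; omega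
  refine hqr ⟨u * s, ?_⟩
  have : (q : ZMod p) = (-1) * (-(q:ZMod p)) := by ring
  rw [this, hs, hu]; ring

lemma unit_lemma (hp1 : p % 4 = 1) (hqr : ¬ IsSquare (q : ZMod p))
    (a b : ℤ_[p]) (hab : ‖a‖ = 1 ∨ ‖b‖ = 1) : ‖a ^ 2 + q * b ^ 2‖ = 1 := by
  rw [key_unit]
  intro h0
  have h0' : (PadicInt.toZMod a) ^ 2 + (q : ZMod p) * (PadicInt.toZMod b) ^ 2 = 0 := by
    simpa using h0
  have hb : PadicInt.toZMod b = 0 := by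
    by_contra hb
    refine negq_not_sq p q hp1 hqr ⟨PadicInt.toZMod a / PadicInt.toZMod b, ?_⟩
    field_simp
    linear_combination -h0'
  have ha : PadicInt.toZMod a = 0 := by
    rw [hb] at h0'; simpa [pow_eq_zero_iff] using h0'
  rcases hab with h | h <;> rw [key_unit] at h <;> [exact h ha; exact h hb]

lemma norm_form (hp1 : p % 4 = 1) (hqr : ¬ IsSquare (q : ZMod p))
    (t x : ℚ_[p]) (h : t ≠ 0 ∨ x ≠ 0) :
    ∃ m : ℤ, ‖t ^ 2 + q * x ^ 2‖ = (p : ℝ) ^ (2 * m) := by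
  rcases le_total ‖x‖ ‖t‖ with hle | hle
  · have ht : t ≠ 0 := by
      rcases h with h | h; · exact h
      intro h0; rw [h0, norm_zero] at hle
      exact h (norm_eq_zero.mp (le_antisymm hle (norm_nonneg x)))
    have hc : ‖x / t‖ ≤ 1 := by
      rw [norm_div, div_le_one (norm_pos_iff.mpr ht)]
      exact hle
    set c : ℤ_[p] := ⟨x / t, hc⟩ with hcdef
    have hcoe : (c : ℚ_[p]) = x / t := rfl
    have key : t ^ 2 + q * x ^ 2 = t ^ 2 * ((1 ^ 2 + q * c ^ 2 : ℤ_[p]) : ℚ_[p]) := by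
      push_cast [hcoe]
      field_simp
    rw [key, norm_mul, ← PadicInt.norm_def,
      unit_lemma p q hp1 hqr 1 c (Or.inl (by simp)), mul_one, norm_pow,
      Padic.norm_eq_zpow_neg_valuation ht, ← zpow_natCast, ← zpow_mul]
    exact ⟨-t.valuation, by ring_nf⟩
  · have hx : x ≠ 0 := by
      rcases h with h | h
      · intro h0; rw [h0, norm_zero] at hle
        exact h (norm_eq_zero.mp (le_antisymm hle (norm_nonneg t)))
      · exact h
    have hc : ‖t / x‖ ≤ 1 := by
      rw [norm_div, div_le_one (norm_pos_iff.mpr hx)]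
      exact hle
    set c : ℤ_[p] := ⟨t / x, hc⟩ with hcdef
    have hcoe : (c : ℚ_[p]) = t / x := rfl
    have key : t ^ 2 + q * x ^ 2 = x ^ 2 * ((c ^ 2 + q * 1 ^ 2 : ℤ_[p]) : ℚ_[p]) := by
      push_cast [hcoe]
      field_simp
    rw [key, norm_mul, ← PadicInt.norm_def,
      unit_lemma p q hp1 hqr c 1 (Or.inr (by simp)), mul_one, norm_pow,
      Padic.norm_eq_zpow_neg_valuation hx, ← zpow_natCast, ← zpow_mul]
    exact ⟨-x.valuation, by ring_nf⟩

lemma aniso (hp1 : p % 4 = 1) (hqr : ¬ IsSquare (q : ZMod p))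
    (t x y z : ℚ_[p]) (h : t ^ 2 + q * x ^ 2 + p * (y ^ 2 + q * z ^ 2) = 0) :
    t = 0 ∧ x = 0 ∧ y = 0 ∧ z = 0 := by
  have hp1R : (1 : ℝ) < (p : ℝ) := by
    exact_mod_cast (Fact.out : p.Prime).one_lt
  have hpne : (p : ℝ) ≠ 0 := by positivity
  have hB : y ^ 2 + q * z ^ 2 = 0 := by
    by_contra hB
    have hyz : y ≠ 0 ∨ z ≠ 0 := by
      by_contra hc; push_neg at hc; apply hB; rw [hc.1, hc.2]; ring
    obtain ⟨m', hm'⟩ := norm_form p q hp1 hqr y z hyz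
    have hA : t ^ 2 + q * x ^ 2 = -((p : ℚ_[p]) * (y ^ 2 + q * z ^ 2)) := by
      linear_combination h
    have hnA : ‖t ^ 2 + q * x ^ 2‖ = (p : ℝ) ^ (2 * m' - 1) := by
      rw [hA, norm_neg, norm_mul, Padic.norm_p, hm', ← zpow_neg_one, ← zpow_add₀ hpne]
      ring_nf
    have htx : t ≠ 0 ∨ x ≠ 0 := by
      by_contra hc; push_neg at hc
      rw [hc.1, hc.2] at hnA
      norm_num at hnA
      exact (zpow_ne_zero _ hpne) hnA.symm
    obtain ⟨m, hm⟩ := norm_form p q hp1 hqr t x htx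
    rw [hnA] at hm
    have := zpow_right_injective₀ (by positivity) (ne_of_gt hp1R) hm.symm
    omega
  have hyz : y = 0 ∧ z = 0 := by
    by_contra hc
    have hyz' : y ≠ 0 ∨ z ≠ 0 := by tauto
    obtain ⟨m, hm⟩ := norm_form p q hp1 hqr y z hyz'
    rw [hB, norm_zero] at hm
    exact (zpow_ne_zero _ hpne) hm.symm
  have hA : t ^ 2 + q * x ^ 2 = 0 := by rw [hB] at h; linear_combination h
  have htx : t = 0 ∧ x = 0 := by
    by_contra hc
    have htx' : t ≠ 0 ∨ x ≠ 0 := by tauto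
    obtain ⟨m, hm⟩ := norm_form p q hp1 hqr t x htx'
    rw [hA, norm_zero] at hm
    exact (zpow_ne_zero _ hpne) hm.symm
  exact ⟨htx.1, htx.2, hyz.1, hyz.2⟩

/-- Let `p ≡ 1 (mod 4)` and `q ≡ 3 (mod 4)` be primes such that `q` is not a quadratic
residue mod `p`. Then `ℍ[ℚₚ, −q, −p]` is a division algebra. -/
theorem quaternionAlgebra_padic_neg_q_neg_p_isDivision (p q : ℕ) [Fact p.Prime]
    (hq : q.Prime) (hp1 : p % 4 = 1) (hq3 : q % 4 = 3)
    (hqr : ¬ IsSquare (q : ZMod p)) :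
    ∀ x : ℍ[ℚ_[p], -(q : ℚ_[p]), -(p : ℚ_[p])], x ≠ 0 → IsUnit x := by
  intro x hx
  set n : ℚ_[p] := x.re ^ 2 + q * x.imI ^ 2 + p * (x.imJ ^ 2 + q * x.imK ^ 2) with hn
  have hn0 : n ≠ 0 := by
    intro h0
    obtain ⟨h1, h2, h3, h4⟩ := aniso p q hp1 hqr x.re x.imI x.imJ x.imK h0
    exact hx (by ext <;> assumption)
  have key1 : x * star x = (n : ℍ[ℚ_[p], -(q : ℚ_[p]), -(p : ℚ_[p])]) := by
    ext <;>
      simp only [QuaternionAlgebra.re_mul, QuaternionAlgebra.imI_mul,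
        QuaternionAlgebra.imJ_mul, QuaternionAlgebra.imK_mul, QuaternionAlgebra.re_star,
        QuaternionAlgebra.imI_star, QuaternionAlgebra.imJ_star, QuaternionAlgebra.imK_star,
        QuaternionAlgebra.re_coe, QuaternionAlgebra.imI_coe, QuaternionAlgebra.imJ_coe,
        QuaternionAlgebra.imK_coe, hn] <;> ring
  have key2 : star x * x = (n : ℍ[ℚ_[p], -(q : ℚ_[p]), -(p : ℚ_[p])]) := by
    ext <;>
      simp only [QuaternionAlgebra.re_mul, QuaternionAlgebra.imI_mul,
        QuaternionAlgebra.imJ_mul, QuaternionAlgebra.imK_mul, QuaternionAlgebra.re_star,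
        QuaternionAlgebra.imI_star, QuaternionAlgebra.imJ_star, QuaternionAlgebra.imK_star,
        QuaternionAlgebra.re_coe, QuaternionAlgebra.imI_coe, QuaternionAlgebra.imJ_coe,
        QuaternionAlgebra.imK_coe, hn] <;> ring
  rw [isUnit_iff_exists]
  refine ⟨star x * ((n⁻¹ : ℚ_[p]) : ℍ[ℚ_[p], -(q : ℚ_[p]), -(p : ℚ_[p])]), ?_, ?_⟩
  · rw [← mul_assoc, key1, ← QuaternionAlgebra.coe_mul, mul_inv_cancel₀ hn0,
      QuaternionAlgebra.coe_one]
  · rw [mul_assoc, QuaternionAlgebra.coe_commutes, ← mul_assoc, key2,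
      ← QuaternionAlgebra.coe_mul, mul_inv_cancel₀ hn0, QuaternionAlgebra.coe_one]
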